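/- arXiv:1401.4161 — 4 statements merged into one kernel-verified Lean document; each statement's English description precedes it below -/
import Mathlib

section
/- For every real N_S > 0 and every integer n ≥ 1, the number of n-tuples (a₁,…,aₙ) of natural numbers with a₁ + ⋯ + aₙ ≤ ⌈n·N_S⌉ is at most e·(1 + 1/N_S)·2^(n·g(N_S)). -/
/-- `g(x) = (x+1)·log₂(x+1) − x·log₂(x)`, the entropy of a thermal state of mean photon
number `x`. -/
noncomputable def g (x : ℝ) : ℝ := (x + 1) * Real.logb 2 (x + 1) - x * Real.logb 2 x

/-- The number of `n`-tuples of natural numbers with sum at most `⌈n·N_S⌉` (the rank of the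
photon-number cutoff projector) is at most `e·(1 + 1/N_S)·2^(n·g(N_S))`. -/
theorem stmt_5 (N_S : ℝ) (hN : 0 < N_S) (n : ℕ) (hn : 1 ≤ n) :
    (Nat.card {a : Fin n → ℕ // (∑ i, a i) ≤ ⌈(n : ℝ) * N_S⌉₊} : ℝ)
      ≤ Real.exp 1 * (1 + 1 / N_S) * 2 ^ ((n : ℝ) * g N_S) := by
  set x : ℝ := N_S with hxdef
  set L : ℕ := ⌈(n : ℝ) * N_S⌉₊ with hLdef
  have hx0 : (0:ℝ) < x := hN
  have hx1 : (0:ℝ) < x + 1 := by linarith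
  have hn0 : (0:ℝ) < (n:ℝ) := by exact_mod_cast hn
  have hL2 : (L : ℝ) ≤ (n:ℝ) * x + 1 := (Nat.ceil_lt_add_one (by positivity)).le
  set q : ℝ := x / (x + 1) with hqdef
  have hq0 : 0 < q := by positivity
  have hq1 : q < 1 := by rw [div_lt_one hx1]; linarith
  set T : Finset (Fin n → ℕ) :=
    (Fintype.piFinset fun _ => Finset.range (L+1)).filter (fun a => ∑ i, a i ≤ L) with hTdef
  have hmem : ∀ a : Fin n → ℕ, (∑ i, a i ≤ L) ↔ a ∈ T := by
    intro a
    simp only [hTdef, Finset.mem_filter, Fintype.mem_piFinset, Finset.mem_range]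
    constructor
    · intro h
      exact ⟨fun i => Nat.lt_succ_of_le
        ((Finset.single_le_sum (fun i _ => Nat.zero_le _) (Finset.mem_univ i)).trans h), h⟩
    · exact fun h => h.2
  have hcardT : Nat.card {a : Fin n → ℕ // ∑ i, a i ≤ L} = T.card := by
    rw [Nat.card_congr (Equiv.subtypeEquivRight hmem), Nat.card_eq_finsetCard]
  have hgeom : ∑ k ∈ Finset.range (L+1), q ^ k ≤ x + 1 := by
    rw [geom_sum_eq hq1.ne]
    rw [div_le_iff_of_neg (by linarith : q - 1 < 0)]
    have h1 : (0:ℝ) ≤ q^(L+1) := by positivity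
    have h2 : (x+1)*(q-1) = -1 := by
      rw [hqdef]; field_simp; ring
    nlinarith
  have key : (T.card : ℝ) * q ^ L ≤ (x+1)^n := by
    calc (T.card : ℝ) * q ^ L = ∑ _a ∈ T, q ^ L := by
          rw [Finset.sum_const, nsmul_eq_mul]
      _ ≤ ∑ a ∈ T, q ^ (∑ i, a i) := by
          refine Finset.sum_le_sum fun a ha => ?_
          exact pow_le_pow_of_le_one hq0.le hq1.le ((hmem a).mpr ha)
      _ ≤ ∑ a ∈ Fintype.piFinset (fun _ : Fin n => Finset.range (L+1)), q ^ (∑ i, a i) :=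
          Finset.sum_le_sum_of_subset_of_nonneg (Finset.filter_subset _ _)
            (fun a _ _ => by positivity)
      _ = ∑ a ∈ Fintype.piFinset (fun _ : Fin n => Finset.range (L+1)), ∏ i, q ^ (a i) :=
          Finset.sum_congr rfl fun a _ => (Finset.prod_pow_eq_pow_sum _ _ _).symm
      _ = ∏ _i : Fin n, ∑ k ∈ Finset.range (L+1), q ^ k := (Finset.prod_univ_sum _ _).symm
      _ ≤ ∏ _i : Fin n, (x+1) :=
          Finset.prod_le_prod (fun _ _ => Finset.sum_nonneg (fun _ _ => by positivity)) (fun i _ => hgeom)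
      _ = (x+1)^n := by rw [Finset.prod_const, Finset.card_univ, Fintype.card_fin]
  set r : ℝ := (x+1)/x with hrdef
  have hr0 : 0 < r := by positivity
  have hr1 : 1 ≤ r := by rw [le_div_iff₀ hx0]; linarith
  have hqinv : q⁻¹ = r := by rw [hqdef, hrdef, inv_div]
  have hcard_le : (T.card : ℝ) ≤ (x+1)^n * r^L := by
    have hq_pow : (0:ℝ) < q ^ L := by positivity
    have h := (le_div_iff₀ hq_pow).mpr key
    rwa [div_eq_mul_inv, ← inv_pow, hqinv] at h
  have h2pow : (2:ℝ) ^ ((n:ℝ) * g N_S) = (x+1) ^ ((n:ℝ)*(x+1)) / x ^ ((n:ℝ)*x) := by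
    have e1 : (n:ℝ) * g N_S
        = Real.logb 2 (x+1) * ((n:ℝ)*(x+1)) - Real.logb 2 x * ((n:ℝ)*x) := by
      simp only [g, ← hxdef]; ring
    rw [e1, Real.rpow_sub two_pos, Real.rpow_mul (by norm_num : (0:ℝ) ≤ 2),
        Real.rpow_mul (by norm_num : (0:ℝ) ≤ 2),
        Real.rpow_logb two_pos (by norm_num) hx1,
        Real.rpow_logb two_pos (by norm_num) hx0]
  have hsplit : (x+1) ^ ((n:ℝ)*(x+1)) / x ^ ((n:ℝ)*x)
      = (x+1) ^ (n:ℝ) * r ^ ((n:ℝ)*x) := by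
    have : (n:ℝ)*(x+1) = (n:ℝ) + (n:ℝ)*x := by ring
    rw [this, Real.rpow_add hx1, hrdef, Real.div_rpow hx1.le hx0.le]
    ring
  have hrL : r ^ ((L:ℝ)) ≤ Real.exp 1 * (1 + 1/x) * r ^ ((n:ℝ)*x) := by
    have h1 : r ^ ((L:ℝ)) ≤ r ^ ((n:ℝ)*x + 1) :=
      Real.rpow_le_rpow_of_exponent_le hr1 hL2
    have h2 : r ^ ((n:ℝ)*x + 1) = r * r ^ ((n:ℝ)*x) := by
      rw [Real.rpow_add hr0, Real.rpow_one]; ring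
    have h3 : (1:ℝ) + 1/x = r := by rw [hrdef]; field_simp
    have h4 : (1:ℝ) ≤ Real.exp 1 := by
      rw [Real.one_le_exp_iff]; norm_num
    have h5 : 0 < r ^ ((n:ℝ)*x) := Real.rpow_pos_of_pos hr0 _
    calc r ^ ((L:ℝ)) ≤ r * r ^ ((n:ℝ)*x) := h1.trans_eq h2
      _ = 1 * ((1 + 1/x) * r ^ ((n:ℝ)*x)) := by rw [h3]; ring
      _ ≤ Real.exp 1 * ((1 + 1/x) * r ^ ((n:ℝ)*x)) := by
          refine mul_le_mul_of_nonneg_right h4 ?_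
          have : 0 < 1 + 1/x := by positivity
          positivity
      _ = Real.exp 1 * (1 + 1/x) * r ^ ((n:ℝ)*x) := by ring
  rw [hcardT, h2pow, hsplit]
  calc (T.card : ℝ) ≤ (x+1)^n * r^L := hcard_le
    _ = (x+1) ^ (n:ℝ) * r ^ ((L:ℝ)) := by
        rw [Real.rpow_natCast, Real.rpow_natCast]
    _ ≤ (x+1) ^ (n:ℝ) * (Real.exp 1 * (1 + 1/x) * r ^ ((n:ℝ)*x)) := by
        refine mul_le_mul_of_nonneg_left hrL ?_
        positivity
    _ = Real.exp 1 * (1 + 1/x) * ((x+1) ^ (n:ℝ) * r ^ ((n:ℝ)*x)) := by ring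
end

section
/- Let T ∈ (0,1], μ ∈ (0,1), G = 1/(1−μ²), and let N_S > 0 and δ > 0 be real. Then for every ε > 0 there exists n₀ such that for all n ≥ n₀ and all n-tuples (a₁,…,aₙ) of natural numbers with a₁ + ⋯ + aₙ ≤ ⌈n·N_S⌉, the sum over all n-tuples (l₁,…,lₙ) of natural numbers with l₁ + ⋯ + lₙ ≤ ⌈n·(T·G·N_S + (G−1) + δ)⌉ of the product Π_{i=1}^n p_{T,μ}(l_i|a_i) is at least 1 − ε. (If the total input photon number is at most ⌈n·N_S⌉, then with probability tending to 1 the total output photon number over n independent channel uses is at most ⌈n·(T·G·N_S + (G−1) + δ)⌉.) -/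
set_option maxHeartbeats 1600000

/-- The photon-number distribution at the output of a quantum-limited amplifier channel of
gain `G = 1/(1−μ²)` applied to the Fock state `|m⟩`. -/
noncomputable def q (μ : ℝ) (m l : ℕ) : ℝ :=
  if m ≤ l then (1 - μ ^ 2) ^ (m + 1) * μ ^ (2 * (l - m)) * (l.choose (l - m)) else 0

/-- The photon-number distribution at the output of a phase-insensitive Gaussian channel
(pure-loss channel of transmissivity `T` followed by a quantum-limited amplifier of gain
`G = 1/(1−μ²)`) applied to the Fock state `|k⟩`. -/
noncomputable def pOut (T μ : ℝ) (k l : ℕ) : ℝ :=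
  ∑ m ∈ Finset.range (k + 1), (k.choose m : ℝ) * T ^ m * (1 - T) ^ (k - m) * q μ m l


namespace Stmt13

open Finset

lemma aux_choose (a b : ℕ) : (a+1) * ((a+b+1).choose b) = (b+1) * ((a+b+1).choose (b+1)) := by
  have h1 := Nat.add_one_mul_choose_eq (a+b) b
  have h2 := Nat.add_one_mul_choose_eq (a+b) a
  have h3 : (a+b).choose a = (a+b).choose b := by
    rw [← Nat.choose_symm (Nat.le_add_right a b)]; congr 1; omega
  have h4 : (a+b+1).choose (a+1) = (a+b+1).choose b := by
    rw [← Nat.choose_symm (by omega : a+1 ≤ a+b+1)]; congr 1; omega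
  calc (a+1) * ((a+b+1).choose b) = (a+1) * ((a+b+1).choose (a+1)) := by rw [h4]
    _ = (a+b+1) * ((a+b).choose a) := by rw [mul_comm ((a:ℕ)+1), ← h2]
    _ = (a+b+1) * ((a+b).choose b) := by rw [h3]
    _ = (b+1) * ((a+b+1).choose (b+1)) := by rw [h1, mul_comm]

variable {x : ℝ}

lemma negbin0 (hx : |x| < 1) (m : ℕ) :
    HasSum (fun j : ℕ => (((j+m).choose m : ℕ) : ℝ) * x^j) (1/(1-x)^(m+1)) :=
  hasSum_choose_mul_geometric_of_norm_lt_one m (by rwa [Real.norm_eq_abs])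

lemma negbin1 (hx : |x| < 1) (m : ℕ) :
    HasSum (fun j : ℕ => (j : ℝ) * (((j+m).choose m : ℕ) : ℝ) * x^j)
      (((m:ℝ)+1)*x/(1-x)^(m+2)) := by
  have h := (negbin0 hx (m+1)).mul_left (((m:ℝ)+1)*x)
  have key : ∀ j : ℕ, (((m:ℝ)+1)*x) * ((((j+(m+1)).choose (m+1) : ℕ):ℝ) * x^j)
      = ((j+1 : ℕ) : ℝ) * ((((j+1)+m).choose m : ℕ):ℝ) * x^(j+1) := by
    intro j
    have hc : (j+1) * (((j+1)+m).choose m) = (m+1) * ((j+(m+1)).choose (m+1)) := by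
      rw [show (j+1)+m = j+m+1 by omega]; exact aux_choose j m
    have hcr : ((j:ℝ)+1) * ((((j+1)+m).choose m : ℕ):ℝ)
        = ((m:ℝ)+1) * (((j+(m+1)).choose (m+1) : ℕ):ℝ) := by exact_mod_cast hc
    rw [pow_succ]; push_cast; push_cast at hcr; linear_combination (x^j * x) * hcr.symm
  rw [funext key] at h
  have h2 := (hasSum_nat_add_iff (f := fun j : ℕ => (j : ℝ) * (((j+m).choose m : ℕ) : ℝ) * x^j) 1).mp h
  simpa [mul_one_div, div_eq_mul_inv, add_assoc] using h2

lemma negbin2 (hx : |x| < 1) (m : ℕ) :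
    HasSum (fun j : ℕ => (j : ℝ) * ((j:ℝ)-1) * (((j+m).choose m : ℕ) : ℝ) * x^j)
      (((m:ℝ)+1)*((m:ℝ)+2)*x^2/(1-x)^(m+3)) := by
  have h := (negbin0 hx (m+2)).mul_left ((((m:ℝ)+1)*((m:ℝ)+2))*x^2)
  have key : ∀ j : ℕ, ((((m:ℝ)+1)*((m:ℝ)+2))*x^2) * ((((j+(m+2)).choose (m+2) : ℕ):ℝ) * x^j)
      = ((j+2 : ℕ) : ℝ) * (((j+2:ℕ):ℝ)-1) * ((((j+2)+m).choose m : ℕ):ℝ) * x^(j+2) := by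
    intro j
    have hc1 : (j+2) * (((j+2)+m).choose m) = (m+1) * ((j+1+(m+1)).choose (m+1)) := by
      rw [show (j+2)+m = (j+1)+m+1 by omega, show j+1+(m+1) = (j+1)+m+1 by omega]
      exact aux_choose (j+1) m
    have hc2 : (j+1) * ((j+1+(m+1)).choose (m+1)) = (m+2) * ((j+(m+2)).choose (m+2)) := by
      rw [show j+1+(m+1) = j+(m+1)+1 by omega, show j+(m+2) = j+(m+1)+1 by omega,
        show m+2 = (m+1)+1 by omega]
      exact aux_choose j (m+1)
    have hcn : (j+1) * ((j+2) * (((j+2)+m).choose m)) = (m+1) * ((m+2) * ((j+(m+2)).choose (m+2))) := by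
      rw [hc1, ← hc2]; ring
    have hcr : ((j:ℝ)+1) * (((j:ℝ)+2) * ((((j+2)+m).choose m : ℕ):ℝ))
        = ((m:ℝ)+1) * (((m:ℝ)+2) * (((j+(m+2)).choose (m+2) : ℕ):ℝ)) := by exact_mod_cast hcn
    rw [show j+2 = (j+1)+1 by omega, pow_succ, pow_succ]
    push_cast
    push_cast at hcr
    linear_combination (x^j * x * x) * hcr.symm
  rw [funext key] at h
  have h2 := (hasSum_nat_add_iff
    (f := fun j : ℕ => (j : ℝ) * ((j:ℝ)-1) * (((j+m).choose m : ℕ) : ℝ) * x^j) 2).mp h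
  have hr : ∑ i ∈ Finset.range 2, (i : ℝ) * ((i:ℝ)-1) * (((i+m).choose m : ℕ) : ℝ) * x^i = 0 := by
    simp [Finset.sum_range_succ]
  rw [hr, add_zero] at h2
  simpa [mul_one_div, div_eq_mul_inv, add_assoc] using h2

section qsection

variable {μ : ℝ}

lemma q_shift (m : ℕ) (w : ℕ → ℝ) (S : ℝ)
    (h : HasSum (fun j : ℕ =>
      w (j+m) * (1-μ^2)^(m+1) * (μ^2)^j * (((j+m).choose m : ℕ):ℝ)) S) :
    HasSum (fun l => w l * q μ m l) S := by
  have key : (fun j : ℕ => w (j+m) * q μ m (j+m)) = (fun j : ℕ =>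
      w (j+m) * (1-μ^2)^(m+1) * (μ^2)^j * (((j+m).choose m : ℕ):ℝ)) := by
    funext j
    rw [q, if_pos (Nat.le_add_left m j)]
    rw [show (j+m).choose (j+m-m) = (j+m).choose m from by
      rw [← Nat.choose_symm (Nat.le_add_left m j)]]
    rw [show j+m-m = j by omega, pow_mul]
    ring
  have h' : HasSum (fun j : ℕ => (fun l => w l * q μ m l) (j+m)) S := by
    exact key ▸ h
  have h2 := (hasSum_nat_add_iff (f := fun l => w l * q μ m l) m).mp h'
  have hz : ∑ i ∈ Finset.range m, w i * q μ m i = 0 := by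
    apply Finset.sum_eq_zero
    intro i hi
    rw [q, if_neg (by simp at hi; omega), mul_zero]
  rwa [hz, add_zero] at h2

variable (hμ : μ ∈ Set.Ioo 0 1)
include hμ

lemma habs : |μ^2| < 1 := by
  rw [abs_of_nonneg (sq_nonneg μ)]
  exact pow_lt_one₀ (le_of_lt hμ.1) hμ.2 two_ne_zero

lemma hsub : (1:ℝ) - μ^2 ≠ 0 := by
  have := habs hμ
  rw [abs_of_nonneg (sq_nonneg μ)] at this
  linarith

lemma hq_sum (m : ℕ) : HasSum (q μ m) 1 := by
  have h := (negbin0 (habs hμ) m).mul_left ((1-μ^2)^(m+1))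
  have h2 : HasSum (fun l => (fun _ : ℕ => (1:ℝ)) l * q μ m l) 1 := by
    apply q_shift m (fun _ => 1) 1
    convert h using 1
    · rfl
    · funext j; ring
    · rw [mul_one_div, div_self (pow_ne_zero _ (hsub hμ))]
  simpa using h2

lemma hq_mean (m : ℕ) : HasSum (fun l : ℕ => (l:ℝ) * q μ m l)
    ((m:ℝ) + ((m:ℝ)+1) * (μ^2/(1-μ^2))) := by
  apply q_shift m (fun l => (l:ℝ))
  have hA := (negbin1 (habs hμ) m).mul_left ((1-μ^2)^(m+1))
  have hB := (negbin0 (habs hμ) m).mul_left ((m:ℝ) * (1-μ^2)^(m+1))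
  convert hA.add hB using 1
  · rfl
  · funext j; push_cast; ring
  · have hp := hsub hμ
    have hP : (1-μ^2)^(m+1) ≠ 0 := pow_ne_zero _ hp
    rw [show (1-μ^2)^(m+2) = (1-μ^2)^(m+1)*(1-μ^2) from pow_succ _ _]
    generalize (1-μ^2)^(m+1) = P at hP ⊢
    field_simp
    ring

lemma hq_sq (m : ℕ) : HasSum (fun l : ℕ => (l:ℝ)^2 * q μ m l)
    ((m:ℝ)^2 + (2*(m:ℝ)+1)*((m:ℝ)+1)*(μ^2/(1-μ^2))
      + ((m:ℝ)+1)*((m:ℝ)+2)*(μ^2/(1-μ^2))^2) := by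
  apply q_shift m (fun l => (l:ℝ)^2)
  have hA := (negbin2 (habs hμ) m).mul_left ((1-μ^2)^(m+1))
  have hB := (negbin1 (habs hμ) m).mul_left ((2*(m:ℝ)+1) * (1-μ^2)^(m+1))
  have hC := (negbin0 (habs hμ) m).mul_left ((m:ℝ)^2 * (1-μ^2)^(m+1))
  convert (hA.add hB).add hC using 1
  · rfl
  · funext j; push_cast; ring
  · have hp := hsub hμ
    have hP : (1-μ^2)^(m+1) ≠ 0 := pow_ne_zero _ hp
    rw [show (1-μ^2)^(m+3) = (1-μ^2)^(m+1)*(1-μ^2)*(1-μ^2) from by rw [pow_succ, pow_succ],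
      show (1-μ^2)^(m+2) = (1-μ^2)^(m+1)*(1-μ^2) from pow_succ _ _]
    generalize (1-μ^2)^(m+1) = P at hP ⊢
    field_simp
    ring

end qsection

lemma q_nonneg {μ : ℝ} (hμ : μ ∈ Set.Ioo (0:ℝ) 1) (m l : ℕ) : 0 ≤ q μ m l := by
  rw [q]
  split_ifs
  · have h1 : (0:ℝ) ≤ 1 - μ^2 := by nlinarith [hμ.1, hμ.2]
    exact mul_nonneg (mul_nonneg (pow_nonneg h1 _) (pow_nonneg hμ.1.le _)) (Nat.cast_nonneg _)
  · exact le_refl _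

lemma bin0 (k : ℕ) (T S : ℝ) :
    ∑ m ∈ range (k+1), (k.choose m : ℝ) * T^m * S^(k-m) = (T+S)^k := by
  rw [add_pow]
  exact Finset.sum_congr rfl fun m _ => by ring

lemma bin1 (k : ℕ) (T S : ℝ) :
    ∑ m ∈ range (k+1), (m:ℝ) * (k.choose m : ℝ) * T^m * S^(k-m) = k*T*(T+S)^(k-1) := by
  cases k with
  | zero => simp
  | succ k =>
    rw [Finset.sum_range_succ']
    have he : ∀ i ∈ range (k+1), ((i+1:ℕ):ℝ) * ((k+1).choose (i+1) : ℝ) * T^(i+1) * S^(k+1-(i+1))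
        = ((k:ℝ)+1)*T * ((k.choose i : ℝ) * T^i * S^(k-i)) := by
      intro i hi
      have hc : (k+1) * (k.choose i) = ((k+1).choose (i+1)) * (i+1) := by
        simpa [Nat.succ_eq_add_one] using Nat.add_one_mul_choose_eq k i
      have hcr : ((k:ℝ)+1) * (k.choose i : ℝ) = (((k+1).choose (i+1)) : ℝ) * ((i:ℝ)+1) := by
        exact_mod_cast hc
      rw [show k+1-(i+1) = k-i by omega, pow_succ]
      push_cast
      linear_combination (T^i * T * S^(k-i)) * hcr.symm
    rw [Finset.sum_congr rfl he]
    rw [← Finset.mul_sum, bin0]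
    push_cast
    simp

lemma bin2 (k : ℕ) (T S : ℝ) :
    ∑ m ∈ range (k+1), (m:ℝ) * ((m:ℝ)-1) * (k.choose m : ℝ) * T^m * S^(k-m)
      = k*((k:ℝ)-1)*T^2*(T+S)^(k-2) := by
  match k with
  | 0 => simp
  | 1 => norm_num [Finset.sum_range_succ]
  | (k+2) =>
    rw [Finset.sum_range_succ']
    have he : ∀ i ∈ range (k+2),
        ((i+1:ℕ):ℝ) * (((i+1:ℕ):ℝ)-1) * ((k+2).choose (i+1) : ℝ) * T^(i+1) * S^(k+2-(i+1))
        = ((k:ℝ)+2)*T * ((i:ℝ) * ((k+1).choose i : ℝ) * T^i * S^(k+1-i)) := by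
      intro i hi
      have hc : (k+2) * ((k+1).choose i) = ((k+2).choose (i+1)) * (i+1) := by
        simpa [Nat.succ_eq_add_one] using Nat.add_one_mul_choose_eq (k+1) i
      have hcr : ((k:ℝ)+2) * ((k+1).choose i : ℝ) = (((k+2).choose (i+1)) : ℝ) * ((i:ℝ)+1) := by
        exact_mod_cast hc
      rw [show k+2-(i+1) = k+1-i by omega, pow_succ]
      push_cast
      linear_combination ((i:ℝ) * T^i * T * S^(k+1-i)) * hcr.symm
    rw [Finset.sum_congr rfl he]
    rw [← Finset.mul_sum, bin1]
    push_cast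
    simp
    ring

lemma binom_sum (k : ℕ) (T : ℝ) (A B C : ℝ) :
    ∑ m ∈ range (k+1), (k.choose m : ℝ) * T^m * (1-T)^(k-m) * (A*(m:ℝ)^2 + B*(m:ℝ) + C)
      = A*((k:ℝ)*((k:ℝ)-1)*T^2 + (k:ℝ)*T) + B*((k:ℝ)*T) + C := by
  have h0 := bin0 k T (1-T)
  have h1 := bin1 k T (1-T)
  have h2 := bin2 k T (1-T)
  rw [show T + (1-T) = 1 by ring, one_pow] at h0 h1 h2
  have he : ∀ m ∈ range (k+1),
      (k.choose m : ℝ) * T^m * (1-T)^(k-m) * (A*(m:ℝ)^2 + B*(m:ℝ) + C)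
      = A*((m:ℝ) * ((m:ℝ)-1) * (k.choose m : ℝ) * T^m * (1-T)^(k-m))
        + (A+B)*((m:ℝ) * (k.choose m : ℝ) * T^m * (1-T)^(k-m))
        + C*((k.choose m : ℝ) * T^m * (1-T)^(k-m)) := fun m _ => by ring
  rw [Finset.sum_congr rfl he, Finset.sum_add_distrib, Finset.sum_add_distrib,
    ← Finset.mul_sum, ← Finset.mul_sum, ← Finset.mul_sum, h0, h1, h2]
  ring

variable {T μ : ℝ}

lemma pOut_nonneg (hT : T ∈ Set.Ioc (0:ℝ) 1) (hμ : μ ∈ Set.Ioo (0:ℝ) 1) (k l : ℕ) :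
    0 ≤ pOut T μ k l := by
  rw [pOut]
  apply Finset.sum_nonneg
  intro m _
  have h1 : (0:ℝ) ≤ 1 - T := by linarith [hT.2]
  exact mul_nonneg (mul_nonneg (mul_nonneg (Nat.cast_nonneg _) (pow_nonneg hT.1.le _))
    (pow_nonneg h1 _)) (q_nonneg hμ m l)

lemma hp_sum (hμ : μ ∈ Set.Ioo (0:ℝ) 1) (k : ℕ) : HasSum (pOut T μ k) 1 := by
  have h : HasSum (fun l : ℕ => ∑ m ∈ range (k+1), (k.choose m : ℝ) * T^m * (1-T)^(k-m) * q μ m l)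
      (∑ m ∈ range (k+1), (k.choose m : ℝ) * T^m * (1-T)^(k-m) * 1) :=
    hasSum_sum fun m _ => (hq_sum hμ m).mul_left _
  have hv : ∑ m ∈ range (k+1), (k.choose m : ℝ) * T^m * (1-T)^(k-m) * 1 = 1 := by
    simp only [mul_one]
    rw [bin0, show T + (1-T) = 1 by ring, one_pow]
  rw [hv] at h
  exact h

lemma hp_mean (hμ : μ ∈ Set.Ioo (0:ℝ) 1) (k : ℕ) :
    HasSum (fun l : ℕ => (l:ℝ) * pOut T μ k l)
      ((1 + μ^2/(1-μ^2))*T*(k:ℝ) + μ^2/(1-μ^2)) := by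
  have h : HasSum (fun l : ℕ =>
      ∑ m ∈ range (k+1), (k.choose m : ℝ) * T^m * (1-T)^(k-m) * ((l:ℝ) * q μ m l))
      (∑ m ∈ range (k+1), (k.choose m : ℝ) * T^m * (1-T)^(k-m)
        * ((m:ℝ) + ((m:ℝ)+1) * (μ^2/(1-μ^2)))) :=
    hasSum_sum fun m _ => (hq_mean hμ m).mul_left _
  have hf : (fun l : ℕ =>
      ∑ m ∈ range (k+1), (k.choose m : ℝ) * T^m * (1-T)^(k-m) * ((l:ℝ) * q μ m l))
      = fun l : ℕ => (l:ℝ) * pOut T μ k l := by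
    funext l
    rw [pOut, Finset.mul_sum]
    exact Finset.sum_congr rfl fun m _ => by ring
  have hv : ∑ m ∈ range (k+1), (k.choose m : ℝ) * T^m * (1-T)^(k-m)
        * ((m:ℝ) + ((m:ℝ)+1) * (μ^2/(1-μ^2)))
      = (1 + μ^2/(1-μ^2))*T*(k:ℝ) + μ^2/(1-μ^2) := by
    have he : ∀ m ∈ range (k+1), (k.choose m : ℝ) * T^m * (1-T)^(k-m)
          * ((m:ℝ) + ((m:ℝ)+1) * (μ^2/(1-μ^2)))
        = (k.choose m : ℝ) * T^m * (1-T)^(k-m)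
          * (0*(m:ℝ)^2 + (1 + μ^2/(1-μ^2))*(m:ℝ) + μ^2/(1-μ^2)) := fun m _ => by ring
    rw [Finset.sum_congr rfl he, binom_sum]
    ring
  rw [hf, hv] at h
  exact h

lemma hp_sq (hμ : μ ∈ Set.Ioo (0:ℝ) 1) (k : ℕ) :
    HasSum (fun l : ℕ => (l:ℝ)^2 * pOut T μ k l)
      ((1 + 2*(μ^2/(1-μ^2)) + (μ^2/(1-μ^2))^2)*((k:ℝ)*((k:ℝ)-1)*T^2 + (k:ℝ)*T)
        + (3*(μ^2/(1-μ^2)) + 3*(μ^2/(1-μ^2))^2)*((k:ℝ)*T)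
        + ((μ^2/(1-μ^2)) + 2*(μ^2/(1-μ^2))^2)) := by
  have h : HasSum (fun l : ℕ =>
      ∑ m ∈ range (k+1), (k.choose m : ℝ) * T^m * (1-T)^(k-m) * ((l:ℝ)^2 * q μ m l))
      (∑ m ∈ range (k+1), (k.choose m : ℝ) * T^m * (1-T)^(k-m)
        * ((m:ℝ)^2 + (2*(m:ℝ)+1)*((m:ℝ)+1)*(μ^2/(1-μ^2))
          + ((m:ℝ)+1)*((m:ℝ)+2)*(μ^2/(1-μ^2))^2)) :=
    hasSum_sum fun m _ => (hq_sq hμ m).mul_left _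
  have hf : (fun l : ℕ =>
      ∑ m ∈ range (k+1), (k.choose m : ℝ) * T^m * (1-T)^(k-m) * ((l:ℝ)^2 * q μ m l))
      = fun l : ℕ => (l:ℝ)^2 * pOut T μ k l := by
    funext l
    rw [pOut, Finset.mul_sum]
    exact Finset.sum_congr rfl fun m _ => by ring
  have hv : ∑ m ∈ range (k+1), (k.choose m : ℝ) * T^m * (1-T)^(k-m)
        * ((m:ℝ)^2 + (2*(m:ℝ)+1)*((m:ℝ)+1)*(μ^2/(1-μ^2))
          + ((m:ℝ)+1)*((m:ℝ)+2)*(μ^2/(1-μ^2))^2)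
      = (1 + 2*(μ^2/(1-μ^2)) + (μ^2/(1-μ^2))^2)*((k:ℝ)*((k:ℝ)-1)*T^2 + (k:ℝ)*T)
        + (3*(μ^2/(1-μ^2)) + 3*(μ^2/(1-μ^2))^2)*((k:ℝ)*T)
        + ((μ^2/(1-μ^2)) + 2*(μ^2/(1-μ^2))^2) := by
    have he : ∀ m ∈ range (k+1), (k.choose m : ℝ) * T^m * (1-T)^(k-m)
          * ((m:ℝ)^2 + (2*(m:ℝ)+1)*((m:ℝ)+1)*(μ^2/(1-μ^2))
            + ((m:ℝ)+1)*((m:ℝ)+2)*(μ^2/(1-μ^2))^2)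
        = (k.choose m : ℝ) * T^m * (1-T)^(k-m)
          * ((1 + 2*(μ^2/(1-μ^2)) + (μ^2/(1-μ^2))^2)*(m:ℝ)^2
            + (3*(μ^2/(1-μ^2)) + 3*(μ^2/(1-μ^2))^2)*(m:ℝ)
            + ((μ^2/(1-μ^2)) + 2*(μ^2/(1-μ^2))^2)) := fun m _ => by ring
    rw [Finset.sum_congr rfl he, binom_sum]
  rw [hf, hv] at h
  exact h

lemma var_bound (c T kk : ℝ) (hc : 0 < c) (hT0 : 0 < T) (hT1 : T ≤ 1) (hk : 0 ≤ kk) :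
    ((1 + 2*c + c^2)*(kk*(kk-1)*T^2 + kk*T) + (3*c + 3*c^2)*(kk*T) + (c + 2*c^2))
      - ((1+c)*T*kk + c)^2 ≤ ((1+c)*((1+c)+c)) * (kk+1) := by
  nlinarith [mul_nonneg hk hT0.le, mul_nonneg (mul_nonneg hk hT0.le) hc.le,
    mul_nonneg (mul_nonneg (mul_nonneg hk hT0.le) hc.le) hc.le,
    mul_nonneg (mul_nonneg hk (mul_nonneg hT0.le hT0.le)) hc.le,
    sq_nonneg (1-T), mul_nonneg (mul_nonneg hk hT0.le) (sub_nonneg.mpr hT1),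
    mul_nonneg (mul_nonneg (mul_nonneg hk hT0.le) (sub_nonneg.mpr hT1)) hc.le,
    mul_nonneg (mul_nonneg (mul_nonneg hk hT0.le) (sub_nonneg.mpr hT1)) hT0.le]

lemma prodHasSum : ∀ (n : ℕ) (g : Fin n → ℕ → ℝ) (s : Fin n → ℝ),
    (∀ i x, 0 ≤ g i x) → (∀ i, HasSum (g i) (s i)) →
    HasSum (fun l : Fin n → ℕ => ∏ i, g i (l i)) (∏ i, s i) := by
  intro n
  induction n with
  | zero =>
    intro g s _ _
    have hf : (fun l : Fin 0 → ℕ => ∏ i, g i (l i)) = fun _ => 1 := by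
      funext l; simp
    rw [hf, Fin.prod_univ_zero]
    have := hasSum_single (f := fun _ : Fin 0 → ℕ => (1:ℝ)) default
      (fun b hb => absurd (Subsingleton.elim b default) hb)
    simpa using this
  | succ n ih =>
    intro g s hg0 hg
    have hrest := ih (fun i => g i.succ) (fun i => s i.succ) (fun i x => hg0 _ _)
      (fun i => hg _)
    have hnn : ∀ l : Fin n → ℕ, 0 ≤ ∏ i, g i.succ (l i) := fun l =>
      Finset.prod_nonneg fun i _ => hg0 _ _
    have hsummable := Summable.mul_of_nonneg (hg 0).summable hrest.summable
      (fun x => hg0 0 x) hnn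
    have hmul := (hg 0).mul hrest hsummable
    rw [Fin.prod_univ_succ]
    apply ((Fin.consEquiv (fun _ => ℕ)).hasSum_iff).mp
    convert hmul using 1
    rfl
    funext p
    simp only [Function.comp_apply]
    rw [Fin.prod_univ_succ]
    simp [Fin.consEquiv]

section moments

variable {n : ℕ} {p : Fin n → ℕ → ℝ} {m s2 : Fin n → ℝ}
  (hp0 : ∀ i x, 0 ≤ p i x) (hps : ∀ i, HasSum (p i) 1)
  (hpm : ∀ i, HasSum (fun x : ℕ => (x:ℝ) * p i x) (m i))
  (hps2 : ∀ i, HasSum (fun x : ℕ => (x:ℝ)^2 * p i x) (s2 i))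

include hp0 hps in
lemma total_sum : HasSum (fun l : Fin n → ℕ => ∏ i, p i (l i)) 1 := by
  have := prodHasSum n p (fun _ => 1) hp0 hps
  simpa using this

include hp0 hps hpm in
lemma coord_mean (i : Fin n) :
    HasSum (fun l : Fin n → ℕ => ((l i : ℕ):ℝ) * ∏ j, p j (l j)) (m i) := by
  have h := prodHasSum n (fun k x => (if k = i then (x:ℝ) else 1) * p k x)
    (fun k => if k = i then m k else 1)
    (fun k x => by split_ifs with h; exacts [mul_nonneg (Nat.cast_nonneg _) (hp0 k x),
      (by rw [one_mul]; exact hp0 k x)])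
    (fun k => by
      by_cases hk : k = i
      · subst hk; simpa using hpm k
      · simpa [hk] using hps k)
  have hf : (fun l : Fin n → ℕ => ∏ k, (if k = i then ((l k : ℕ):ℝ) else 1) * p k (l k))
      = fun l : Fin n → ℕ => ((l i : ℕ):ℝ) * ∏ j, p j (l j) := by
    funext l
    rw [Finset.prod_mul_distrib, Finset.prod_ite_eq', if_pos (Finset.mem_univ i)]
  have hv : (∏ k, if k = i then m k else 1) = m i := by
    rw [Finset.prod_ite_eq', if_pos (Finset.mem_univ i)]
  rw [hf, hv] at h
  exact h

include hp0 hps hps2 in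
lemma coord_sq (i : Fin n) :
    HasSum (fun l : Fin n → ℕ => ((l i : ℕ):ℝ)^2 * ∏ j, p j (l j)) (s2 i) := by
  have h := prodHasSum n (fun k x => (if k = i then ((x:ℝ))^2 else 1) * p k x)
    (fun k => if k = i then s2 k else 1)
    (fun k x => by split_ifs with h; exacts [mul_nonneg (sq_nonneg _) (hp0 k x),
      (by rw [one_mul]; exact hp0 k x)])
    (fun k => by
      by_cases hk : k = i
      · subst hk; simpa using hps2 k
      · simpa [hk] using hps k)
  have hf : (fun l : Fin n → ℕ => ∏ k, (if k = i then ((l k : ℕ):ℝ)^2 else 1) * p k (l k))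
      = fun l : Fin n → ℕ => ((l i : ℕ):ℝ)^2 * ∏ j, p j (l j) := by
    funext l
    rw [Finset.prod_mul_distrib]
    congr 1
    rw [show (fun k => if k = i then ((l k : ℕ):ℝ)^2 else 1)
      = (fun k => if k = i then (fun k' => ((l k' : ℕ):ℝ)^2) k else 1) from rfl]
    rw [Finset.prod_ite_eq', if_pos (Finset.mem_univ i)]
  have hv : (∏ k, if k = i then s2 k else 1) = s2 i := by
    rw [Finset.prod_ite_eq', if_pos (Finset.mem_univ i)]
  rw [hf, hv] at h
  exact h

include hp0 hps hpm in
lemma coord_pair (i j : Fin n) (hij : i ≠ j) :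
    HasSum (fun l : Fin n → ℕ => ((l i : ℕ):ℝ) * ((l j : ℕ):ℝ) * ∏ k, p k (l k))
      (m i * m j) := by
  have h := prodHasSum n
    (fun k x => (if k = i then (x:ℝ) else 1) * ((if k = j then (x:ℝ) else 1) * p k x))
    (fun k => (if k = i then m k else 1) * (if k = j then m k else 1))
    (fun k x => by
      have h1 : (0:ℝ) ≤ (if k = i then (x:ℝ) else 1) := by split_ifs; exacts [Nat.cast_nonneg _, zero_le_one]
      have h2 : (0:ℝ) ≤ (if k = j then (x:ℝ) else 1) := by split_ifs; exacts [Nat.cast_nonneg _, zero_le_one]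
      exact mul_nonneg h1 (mul_nonneg h2 (hp0 k x)))
    (fun k => by
      by_cases hk : k = i
      · subst hk
        simpa [hij] using hpm k
      · by_cases hk' : k = j
        · subst hk'
          simpa [hk] using hpm k
        · simpa [hk, hk'] using hps k)
  have hf : (fun l : Fin n → ℕ =>
      ∏ k, (if k = i then ((l k : ℕ):ℝ) else 1) * ((if k = j then ((l k : ℕ):ℝ) else 1) * p k (l k)))
      = fun l : Fin n → ℕ => ((l i : ℕ):ℝ) * ((l j : ℕ):ℝ) * ∏ k, p k (l k) := by
    funext l
    rw [Finset.prod_mul_distrib, Finset.prod_mul_distrib,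
      Finset.prod_ite_eq', Finset.prod_ite_eq', if_pos (Finset.mem_univ i),
      if_pos (Finset.mem_univ j), mul_assoc]
  have hv : (∏ k, (if k = i then m k else 1) * (if k = j then m k else 1)) = m i * m j := by
    rw [Finset.prod_mul_distrib, Finset.prod_ite_eq', Finset.prod_ite_eq',
      if_pos (Finset.mem_univ i), if_pos (Finset.mem_univ j)]
  rw [hf, hv] at h
  exact h

include hp0 hps hpm in
lemma mean_total :
    HasSum (fun l : Fin n → ℕ => (∑ i, ((l i : ℕ):ℝ)) * ∏ j, p j (l j)) (∑ i, m i) := by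
  have h := hasSum_sum (s := univ)
    (f := fun (i : Fin n) (l : Fin n → ℕ) => ((l i : ℕ):ℝ) * ∏ j, p j (l j))
    (a := m) (fun i _ => coord_mean hp0 hps hpm i)
  have hf : (fun l : Fin n → ℕ => ∑ i, ((l i : ℕ):ℝ) * ∏ j, p j (l j))
      = fun l : Fin n → ℕ => (∑ i, ((l i : ℕ):ℝ)) * ∏ j, p j (l j) := by
    funext l
    rw [Finset.sum_mul]
  rwa [hf] at h

include hp0 hps hpm hps2 in
lemma sq_total :
    HasSum (fun l : Fin n → ℕ => (∑ i, ((l i : ℕ):ℝ))^2 * ∏ j, p j (l j))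
      (∑ i, ∑ j, (if i = j then s2 i else m i * m j)) := by
  have hpair : ∀ i j : Fin n, HasSum
      (fun l : Fin n → ℕ => ((l i : ℕ):ℝ) * ((l j : ℕ):ℝ) * ∏ k, p k (l k))
      (if i = j then s2 i else m i * m j) := by
    intro i j
    by_cases hij : i = j
    · subst hij
      rw [if_pos rfl]
      have := coord_sq hp0 hps hps2 i
      have hf : (fun l : Fin n → ℕ => ((l i : ℕ):ℝ)^2 * ∏ j, p j (l j))
          = fun l : Fin n → ℕ => ((l i : ℕ):ℝ) * ((l i : ℕ):ℝ) * ∏ k, p k (l k) := by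
        funext l; rw [pow_two]
      rwa [hf] at this
    · rw [if_neg hij]
      exact coord_pair hp0 hps hpm i j hij
  have h := hasSum_sum (s := univ)
    (f := fun (i : Fin n) (l : Fin n → ℕ) =>
      ∑ j, ((l i : ℕ):ℝ) * ((l j : ℕ):ℝ) * ∏ k, p k (l k))
    (a := fun i => ∑ j, (if i = j then s2 i else m i * m j))
    (fun i _ => hasSum_sum (s := univ)
      (f := fun (j : Fin n) (l : Fin n → ℕ) =>
        ((l i : ℕ):ℝ) * ((l j : ℕ):ℝ) * ∏ k, p k (l k))
      (a := fun j => if i = j then s2 i else m i * m j)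
      (fun j _ => hpair i j))
  have hf : (fun l : Fin n → ℕ =>
      ∑ i, ∑ j, ((l i : ℕ):ℝ) * ((l j : ℕ):ℝ) * ∏ k, p k (l k))
      = fun l : Fin n → ℕ => (∑ i, ((l i : ℕ):ℝ))^2 * ∏ j, p j (l j) := by
    funext l
    rw [pow_two, Finset.sum_mul_sum, Finset.sum_mul]
    refine Finset.sum_congr rfl fun i _ => ?_
    rw [Finset.sum_mul]
  rwa [hf] at h

include hp0 hps hpm hps2 in
lemma centered_total :
    HasSum (fun l : Fin n → ℕ => ((∑ i, ((l i : ℕ):ℝ)) - (∑ i, m i))^2 * ∏ j, p j (l j))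
      (∑ i, (s2 i - m i * m i)) := by
  set M := ∑ i, m i with hM
  have h := ((sq_total hp0 hps hpm hps2).sub
    ((mean_total hp0 hps hpm).mul_left (2*M))).add ((total_sum hp0 hps).mul_left (M^2))
  have hf : (fun l : Fin n → ℕ =>
      ((∑ i, ((l i : ℕ):ℝ))^2 * ∏ j, p j (l j)
        - 2*M * ((∑ i, ((l i : ℕ):ℝ)) * ∏ j, p j (l j)))
      + M^2 * ∏ j, p j (l j))
      = fun l : Fin n → ℕ => ((∑ i, ((l i : ℕ):ℝ)) - M)^2 * ∏ j, p j (l j) := by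
    funext l; ring
  have hv : ((∑ i, ∑ j, (if i = j then s2 i else m i * m j)) - 2*M*M) + M^2*1
      = ∑ i, (s2 i - m i * m i) := by
    have hM2 : M^2 = ∑ i, ∑ j, m i * m j := by
      rw [pow_two, hM, Finset.sum_mul_sum]
    have : (∑ i, ∑ j, (if i = j then s2 i else m i * m j)) - ∑ i, ∑ j, m i * m j
        = ∑ i, (s2 i - m i * m i) := by
      rw [← Finset.sum_sub_distrib]
      refine Finset.sum_congr rfl fun i _ => ?_
      rw [← Finset.sum_sub_distrib]
      have he : ∀ j ∈ univ, (if i = j then s2 i else m i * m j) - m i * m j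
          = (if i = j then s2 i - m i * m j else 0) := by
        intro j _
        split_ifs <;> ring
      rw [Finset.sum_congr rfl he, Finset.sum_ite_eq, if_pos (Finset.mem_univ i)]
    calc ((∑ i, ∑ j, (if i = j then s2 i else m i * m j)) - 2*M*M) + M^2*1
        = (∑ i, ∑ j, (if i = j then s2 i else m i * m j)) - M^2 := by ring
      _ = ∑ i, (s2 i - m i * m i) := by rw [hM2, this]
  rwa [hf, hv] at h

end moments

end Stmt13

section
open Finset Stmt13

/-- If the total input photon number is at most `⌈n·N_S⌉`, then with probability tending
to `1` (as `n → ∞`, uniformly over such inputs), the total output photon number over `n`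
independent uses of a phase-insensitive channel is at most
`⌈n·(T·G·N_S + (G−1) + δ)⌉` where `G = 1/(1−μ²)`. -/
theorem stmt_13 (T μ : ℝ) (hT : T ∈ Set.Ioc (0 : ℝ) 1) (hμ : μ ∈ Set.Ioo (0 : ℝ) 1)
    (N_S δ : ℝ) (hNS : 0 < N_S) (hδ : 0 < δ) :
    ∀ ε > 0, ∃ n₀ : ℕ, ∀ n ≥ n₀, ∀ a : Fin n → ℕ,
      (∑ i, a i) ≤ ⌈(n : ℝ) * N_S⌉₊ →
      1 - ε ≤ ∑' l : Fin n → ℕ,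
        (if (∑ i, l i) ≤
            ⌈(n : ℝ) * (T * (1 / (1 - μ ^ 2)) * N_S + (1 / (1 - μ ^ 2) - 1) + δ)⌉₊
          then ∏ i, pOut T μ (a i) (l i) else 0) := by
  intro ε hε
  obtain ⟨hT0, hT1⟩ := hT
  obtain ⟨hμ0, hμ1⟩ := hμ
  have hμ' : μ ∈ Set.Ioo (0:ℝ) 1 := ⟨hμ0, hμ1⟩
  have hT' : T ∈ Set.Ioc (0:ℝ) 1 := ⟨hT0, hT1⟩
  have hx1 : μ^2 < 1 := by nlinarith
  have hxs : (0:ℝ) < 1 - μ^2 := by linarith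
  set c : ℝ := μ^2/(1-μ^2) with hc_def
  have hc : 0 < c := div_pos (by positivity) hxs
  have hG : 1/(1-μ^2) = 1 + c := by rw [hc_def, one_add_div hxs.ne']; ring
  set Bc : ℝ := (1+c)*((1+c)+c) with hBc_def
  have hBc : 0 < Bc := by positivity
  obtain ⟨n₀, hn₀⟩ := exists_nat_gt (max (2*(1+c)*T/δ) (4*Bc*(N_S+2)/(ε*δ^2)))
  refine ⟨n₀+1, ?_⟩
  intro n hn a hA
  have hn1 : 1 ≤ (n:ℝ) := by exact_mod_cast Nat.one_le_iff_ne_zero.mpr (by omega)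
  have hnR : (max (2*(1+c)*T/δ) (4*Bc*(N_S+2)/(ε*δ^2)) : ℝ) < n := by
    refine lt_of_lt_of_le hn₀ ?_
    exact_mod_cast Nat.le_of_succ_le hn
  have hnR1 : 2*(1+c)*T/δ < (n:ℝ) := lt_of_le_of_lt (le_max_left _ _) hnR
  have hnR2 : 4*Bc*(N_S+2)/(ε*δ^2) < (n:ℝ) := lt_of_le_of_lt (le_max_right _ _) hnR
  set L := ⌈(n : ℝ) * (T * (1 / (1 - μ ^ 2)) * N_S + (1 / (1 - μ ^ 2) - 1) + δ)⌉₊ with hL_def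
  -- distribution facts
  have hp0 : ∀ (i : Fin n) (x : ℕ), 0 ≤ pOut T μ (a i) x := fun i x => pOut_nonneg hT' hμ' _ x
  have hps : ∀ i : Fin n, HasSum (pOut T μ (a i)) 1 := fun i => hp_sum hμ' _
  have hpm : ∀ i : Fin n, HasSum (fun x : ℕ => (x:ℝ) * pOut T μ (a i) x)
      ((fun i : Fin n => (1+c)*T*((a i : ℕ):ℝ) + c) i) := by
    intro i
    simpa [hc_def] using hp_mean (T := T) hμ' (a i)
  have hps2 : ∀ i : Fin n, HasSum (fun x : ℕ => (x:ℝ)^2 * pOut T μ (a i) x)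
      ((fun i : Fin n => (1 + 2*c + c^2)*(((a i:ℕ):ℝ)*(((a i:ℕ):ℝ)-1)*T^2 + ((a i:ℕ):ℝ)*T)
        + (3*c + 3*c^2)*(((a i:ℕ):ℝ)*T) + (c + 2*c^2)) i) := by
    intro i
    simpa [hc_def] using hp_sq (T := T) hμ' (a i)
  have hF : HasSum (fun l : Fin n → ℕ => ∏ i, pOut T μ (a i) (l i)) 1 :=
    total_sum hp0 hps
  set M : ℝ := ∑ i : Fin n, ((1+c)*T*((a i : ℕ):ℝ) + c) with hM_def
  set V : ℝ := ∑ i : Fin n,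
      (((1 + 2*c + c^2)*(((a i:ℕ):ℝ)*(((a i:ℕ):ℝ)-1)*T^2 + ((a i:ℕ):ℝ)*T)
        + (3*c + 3*c^2)*(((a i:ℕ):ℝ)*T) + (c + 2*c^2))
        - ((1+c)*T*((a i : ℕ):ℝ) + c) * ((1+c)*T*((a i : ℕ):ℝ) + c)) with hV_def
  have hCent : HasSum (fun l : Fin n → ℕ =>
      ((∑ i, ((l i : ℕ):ℝ)) - M)^2 * ∏ j, pOut T μ (a j) (l j)) V :=
    centered_total hp0 hps hpm hps2
  -- numeric bounds
  have hA_real : (∑ i, ((a i : ℕ):ℝ)) ≤ (n:ℝ)*N_S + 1 := by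
    have h1 : ((∑ i, a i : ℕ):ℝ) ≤ ((⌈(n : ℝ) * N_S⌉₊ : ℕ):ℝ) := by exact_mod_cast hA
    have h2 : ((⌈(n : ℝ) * N_S⌉₊ : ℕ):ℝ) < (n:ℝ)*N_S + 1 :=
      Nat.ceil_lt_add_one (by positivity)
    rw [Nat.cast_sum] at h1
    linarith
  have hAnn : (0:ℝ) ≤ ∑ i, ((a i : ℕ):ℝ) := Finset.sum_nonneg fun i _ => Nat.cast_nonneg _
  have hM_eq : M = (1+c)*T*(∑ i, ((a i : ℕ):ℝ)) + (n:ℝ)*c := by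
    rw [hM_def, Finset.sum_add_distrib, ← Finset.mul_sum, Finset.sum_const,
      Finset.card_univ, Fintype.card_fin, nsmul_eq_mul]
  have hMle : M ≤ (1+c)*T*((n:ℝ)*N_S+1) + (n:ℝ)*c := by
    rw [hM_eq]
    have : (1+c)*T*(∑ i, ((a i : ℕ):ℝ)) ≤ (1+c)*T*((n:ℝ)*N_S+1) :=
      mul_le_mul_of_nonneg_left hA_real (by positivity)
    linarith
  have hLge : (n:ℝ)*(T*(1+c)*N_S + c + δ) ≤ (L:ℝ) := by
    have h1 := Nat.le_ceil ((n : ℝ) * (T * (1 / (1 - μ ^ 2)) * N_S + (1 / (1 - μ ^ 2) - 1) + δ))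
    rw [← hL_def] at h1
    have hX : (n:ℝ)*(T*(1+c)*N_S + c + δ)
        = (n : ℝ) * (T * (1 / (1 - μ ^ 2)) * N_S + (1 / (1 - μ ^ 2) - 1) + δ) := by
      rw [hG]; ring
    rw [hX]
    exact h1
  have hgap : (0:ℝ) < (n:ℝ)*δ/2 := by positivity
  have ha1 : (1+c)*T ≤ (n:ℝ)*δ/2 := by
    have := (div_lt_iff₀ hδ).mp hnR1
    linarith
  have hML : M + (n:ℝ)*δ/2 ≤ (L:ℝ) + 1 := by nlinarith [hMle, ha1, hLge]
  -- summability of parts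
  have hFnn : ∀ l : Fin n → ℕ, 0 ≤ ∏ i, pOut T μ (a i) (l i) := fun l =>
    Finset.prod_nonneg fun i _ => hp0 i (l i)
  have hGs : Summable (fun l : Fin n → ℕ =>
      if (∑ i, l i) ≤ L then ∏ i, pOut T μ (a i) (l i) else 0) := by
    apply Summable.of_nonneg_of_le (fun l => ?_) (fun l => ?_) hF.summable
    · split_ifs; exacts [hFnn l, le_refl 0]
    · split_ifs; exacts [le_refl _, hFnn l]
  have hBs : Summable (fun l : Fin n → ℕ =>
      if (∑ i, l i) ≤ L then 0 else ∏ i, pOut T μ (a i) (l i)) := by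
    apply Summable.of_nonneg_of_le (fun l => ?_) (fun l => ?_) hF.summable
    · split_ifs; exacts [le_refl 0, hFnn l]
    · split_ifs; exacts [hFnn l, le_refl _]
  have hsplit : (∑' l : Fin n → ℕ, (if (∑ i, l i) ≤ L then ∏ i, pOut T μ (a i) (l i) else 0))
      + (∑' l : Fin n → ℕ, (if (∑ i, l i) ≤ L then 0 else ∏ i, pOut T μ (a i) (l i))) = 1 := by
    rw [← Summable.tsum_add hGs hBs]
    rw [show (fun l : Fin n → ℕ =>
        (if (∑ i, l i) ≤ L then ∏ i, pOut T μ (a i) (l i) else 0)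
        + (if (∑ i, l i) ≤ L then 0 else ∏ i, pOut T μ (a i) (l i)))
      = fun l : Fin n → ℕ => ∏ i, pOut T μ (a i) (l i) from funext fun l => by
        split_ifs <;> ring]
    exact hF.tsum_eq
  -- tail bound
  have hbad_le : (∑' l : Fin n → ℕ, (if (∑ i, l i) ≤ L then 0 else ∏ i, pOut T μ (a i) (l i)))
      ≤ V / ((n:ℝ)*δ/2)^2 := by
    have hptwise : ∀ l : Fin n → ℕ,
        (if (∑ i, l i) ≤ L then 0 else ∏ i, pOut T μ (a i) (l i))
        ≤ ((((∑ i, ((l i : ℕ):ℝ)) - M)^2) * ∏ j, pOut T μ (a j) (l j)) / ((n:ℝ)*δ/2)^2 := by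
      intro l
      split_ifs with hcond
      · exact div_nonneg (mul_nonneg (sq_nonneg _) (hFnn l)) (sq_nonneg _)
      · have h1 : (L:ℝ) + 1 ≤ (∑ i, ((l i : ℕ):ℝ)) := by
          rw [← Nat.cast_sum]
          exact_mod_cast Nat.succ_le_of_lt (Nat.lt_of_not_le hcond)
        have h2 : (n:ℝ)*δ/2 ≤ (∑ i, ((l i : ℕ):ℝ)) - M := by linarith
        have h3 : ((n:ℝ)*δ/2)^2 ≤ ((∑ i, ((l i : ℕ):ℝ)) - M)^2 :=
          pow_le_pow_left₀ hgap.le h2 2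
        rw [le_div_iff₀ (by positivity)]
        calc (∏ i, pOut T μ (a i) (l i)) * ((n:ℝ)*δ/2)^2
            ≤ (∏ i, pOut T μ (a i) (l i)) * ((∑ i, ((l i : ℕ):ℝ)) - M)^2 :=
              mul_le_mul_of_nonneg_left h3 (hFnn l)
          _ = (((∑ i, ((l i : ℕ):ℝ)) - M)^2) * ∏ j, pOut T μ (a j) (l j) := by ring
    have := Summable.tsum_le_tsum hptwise hBs ((hCent.summable).div_const _)
    rwa [tsum_div_const, hCent.tsum_eq] at this
  -- bound V
  have hvar : ∀ i : Fin n,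
      ((1 + 2*c + c^2)*(((a i:ℕ):ℝ)*(((a i:ℕ):ℝ)-1)*T^2 + ((a i:ℕ):ℝ)*T)
        + (3*c + 3*c^2)*(((a i:ℕ):ℝ)*T) + (c + 2*c^2))
        - ((1+c)*T*((a i : ℕ):ℝ) + c) * ((1+c)*T*((a i : ℕ):ℝ) + c)
      ≤ Bc * (((a i:ℕ):ℝ)+1) := by
    intro i
    have h := var_bound c T ((a i : ℕ):ℝ) hc hT0 hT1 (Nat.cast_nonneg _)
    rw [hBc_def]
    nlinarith [h]
  have hVle : V ≤ Bc*((n:ℝ)*N_S + 1 + (n:ℝ)) := by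
    have h1 : V ≤ ∑ i : Fin n, Bc * (((a i:ℕ):ℝ)+1) := Finset.sum_le_sum fun i _ => hvar i
    have h2 : ∑ i : Fin n, Bc * (((a i:ℕ):ℝ)+1)
        = Bc * ((∑ i, ((a i : ℕ):ℝ)) + (n:ℝ)) := by
      rw [← Finset.mul_sum, Finset.sum_add_distrib, Finset.sum_const, Finset.card_univ,
        Fintype.card_fin, nsmul_eq_mul, mul_one]
    have h3 : Bc * ((∑ i, ((a i : ℕ):ℝ)) + (n:ℝ)) ≤ Bc*((n:ℝ)*N_S + 1 + (n:ℝ)) := by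
      apply mul_le_mul_of_nonneg_left _ hBc.le
      linarith
    linarith [h1, h2.le, h2.ge]
  have hVeps : V / ((n:ℝ)*δ/2)^2 ≤ ε := by
    rw [div_le_iff₀ (by positivity)]
    have hn2 : 4*Bc*(N_S+2) < (n:ℝ)*(ε*δ^2) := (div_lt_iff₀ (by positivity)).mp hnR2
    nlinarith [hVle, hn2, hBc, hn1, hNS, hδ, hε, mul_le_mul_of_nonneg_left hn2.le
      (by positivity : (0:ℝ) ≤ (n:ℝ)/4)]
  linarith [hsplit, hbad_le, hVeps]

end
end

section
/- Let X be a countable type, let p : X → ℝ be a probability mass function (p(x) ≥ 0 for all x and Σ_x p(x) = 1), let α > 1 and ε ∈ (0,1), and set H_α(p) = (1/(1−α))·log₂(Σ_x p(x)^α). Then there exists p̃ : X → ℝ with 0 ≤ p̃(x) ≤ p(x) for all x, Σ_x (p(x) − p̃(x)) ≤ ε, and p̃(x) ≤ 2^(−H_α(p))·(1/ε)^(1/(α−1)) for all x. (Classical form of the inequality H_min^ε(p) ≥ H_α(p) − (1/(α−1))·log₂(1/ε) relating smooth min-entropy and Rényi entropy.) -/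
/-- Classical form of the inequality `H_min^ε(p) ≥ H_α(p) − (1/(α−1))·log₂(1/ε)` relating
the smooth min-entropy and the Rényi entropy of order `α > 1`: there is a subnormalized
distribution `p̃ ≤ p` that is `ε`-close to `p` in `ℓ¹` distance and satisfies
`p̃(x) ≤ 2^(−H_α(p))·(1/ε)^(1/(α−1))` for every `x`. -/
theorem stmt_14 {X : Type*} [Countable X] (p : X → ℝ)
    (hp0 : ∀ x, 0 ≤ p x) (hp1 : HasSum p 1)
    (α : ℝ) (hα : 1 < α) (ε : ℝ) (hε : ε ∈ Set.Ioo (0 : ℝ) 1) :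
    ∃ pt : X → ℝ,
      (∀ x, 0 ≤ pt x ∧ pt x ≤ p x) ∧
      (∑' x, (p x - pt x)) ≤ ε ∧
      ∀ x, pt x ≤
        (2 : ℝ) ^ (-((1 / (1 - α)) * Real.logb 2 (∑' y, p y ^ α)))
          * (1 / ε) ^ (1 / (α - 1)) := by
  obtain ⟨hε0, hε1⟩ := hε
  have hα1 : (0:ℝ) < α - 1 := by linarith
  have hple1 : ∀ x, p x ≤ 1 := fun x => le_hasSum hp1 x (fun y _ => hp0 y)
  -- summability of p^α
  have hpow_le : ∀ x, p x ^ α ≤ p x := by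
    intro x
    rcases eq_or_lt_of_le (hp0 x) with h | h
    · rw [← h, Real.zero_rpow (by linarith : α ≠ 0)]
    · calc p x ^ α ≤ p x ^ (1:ℝ) :=
            Real.rpow_le_rpow_of_exponent_ge h (hple1 x) (le_of_lt hα)
        _ = p x := Real.rpow_one _
  have hSsum : Summable (fun x => p x ^ α) :=
    Summable.of_nonneg_of_le (fun x => Real.rpow_nonneg (hp0 x) α) hpow_le hp1.summable
  set S := ∑' y, p y ^ α with hSdef
  have hSpos : 0 < S := by
    -- there is some x with p x > 0
    obtain ⟨x, hx⟩ : ∃ x, 0 < p x := by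
      by_contra h
      push_neg at h
      have : ∀ x, p x = 0 := fun x => le_antisymm (h x) (hp0 x)
      have : HasSum p 0 := by
        have : p = fun _ => (0:ℝ) := funext this
        rw [this]; exact hasSum_zero
      exact one_ne_zero (hp1.unique this)
    have : 0 < p x ^ α := Real.rpow_pos_of_pos hx α
    calc (0:ℝ) < p x ^ α := this
      _ ≤ S := Summable.le_tsum hSsum x (fun y _ => Real.rpow_nonneg (hp0 y) α)
  set L := (2 : ℝ) ^ (-((1 / (1 - α)) * Real.logb 2 S)) * (1 / ε) ^ (1 / (α - 1)) with hLdef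
  have hLeq : L = (S / ε) ^ (1 / (α - 1)) := by
    have h1 : -((1 / (1 - α)) * Real.logb 2 S) = Real.logb 2 S * (1 / (α - 1)) := by
      have hne : (1:ℝ) - α ≠ 0 := by linarith
      field_simp
      ring
    rw [hLdef, h1, Real.rpow_mul (by norm_num : (0:ℝ) ≤ 2),
      Real.rpow_logb (by norm_num) (by norm_num) hSpos,
      ← Real.mul_rpow (le_of_lt hSpos) (by positivity), mul_one_div, div_eq_mul_one_div]
  have hLpos : 0 < L := by rw [hLeq]; positivity
  have hLpow : L ^ (α - 1) = S / ε := by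
    rw [hLeq, ← Real.rpow_mul (by positivity), one_div,
      inv_mul_cancel₀ (ne_of_gt hα1), Real.rpow_one]
  refine ⟨fun x => if p x ≤ L then p x else 0, ?_, ?_, ?_⟩
  · intro x
    by_cases h : p x ≤ L <;> simp [h, hp0 x]
  · -- the removed mass is at most ε
    set f := fun x => p x - (if p x ≤ L then p x else 0) with hfdef
    have hf_eq : ∀ x, f x = if p x ≤ L then 0 else p x := by
      intro x; by_cases h : p x ≤ L <;> simp [hfdef, h]
    have hf_nonneg : ∀ x, 0 ≤ f x := by
      intro x; rw [hf_eq]; by_cases h : p x ≤ L <;> simp [h, hp0 x]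
    have hLpow_pos : 0 < L ^ (α - 1) := Real.rpow_pos_of_pos hLpos _
    have hf_le : ∀ x, f x ≤ p x ^ α / L ^ (α - 1) := by
      intro x
      rw [hf_eq]
      by_cases h : p x ≤ L
      · simp only [h, if_true]
        exact div_nonneg (Real.rpow_nonneg (hp0 x) _) (le_of_lt hLpow_pos)
      · simp only [h, if_false]
        push_neg at h
        rw [le_div_iff₀ hLpow_pos]
        calc p x * L ^ (α - 1) ≤ p x * p x ^ (α - 1) := by
              apply mul_le_mul_of_nonneg_left _ (hp0 x)
              exact Real.rpow_le_rpow (le_of_lt hLpos) (le_of_lt h) (le_of_lt hα1)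
          _ = p x ^ (1:ℝ) * p x ^ (α - 1) := by rw [Real.rpow_one]
          _ = p x ^ α := by
              rw [← Real.rpow_add (lt_of_le_of_lt (le_of_lt hLpos) h)]
              ring_nf
    have hg_sum : Summable (fun x => p x ^ α / L ^ (α - 1)) := hSsum.div_const _
    have hf_sum : Summable f :=
      Summable.of_nonneg_of_le hf_nonneg
        (fun x => by rw [hf_eq]; by_cases h : p x ≤ L <;> simp [h, hp0 x]) hp1.summable
    calc (∑' x, f x) ≤ ∑' x, p x ^ α / L ^ (α - 1) := Summable.tsum_le_tsum hf_le hf_sum hg_sum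
      _ = S / L ^ (α - 1) := by rw [tsum_div_const]
      _ = ε := by rw [hLpow]; field_simp
  · intro x
    by_cases h : p x ≤ L <;> simp [h, hLdef ▸ h, le_of_lt hLpos]
end

section
/- For every real N > 0 there exists α₀ > 1 such that for all α ∈ (1, α₀): log₂((N+1)^α − N^α)/(α−1) ≥ g(N) − 4·(α−1)·(log₂ v(N))², where v(N) = ((N+1)^(3/2) − N^(3/2))² + ((N+1)^(1/2) − N^(1/2))^(−2) + 1. That is, for α sufficiently close to 1, the order-α Rényi entropy of the thermal distribution with mean N is at least its Shannon entropy g(N) minus (α−1)·K(N) with K(N) = 4·(log₂ v(N))². -/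
/-- `v(N) = ((N+1)^{3/2} − N^{3/2})² + ((N+1)^{1/2} − N^{1/2})^{−2} + 1`. -/
noncomputable def v (N : ℝ) : ℝ :=
  ((N + 1) ^ ((3 : ℝ) / 2) - N ^ ((3 : ℝ) / 2)) ^ 2
    + ((N + 1) ^ ((1 : ℝ) / 2) - N ^ ((1 : ℝ) / 2)) ^ (-2 : ℤ) + 1

-- key inequality: N(N+1) (log(N+1)-log N)^2 ≤ 1
lemma key_ineq (N : ℝ) (hN : 0 < N) :
    N * (N + 1) * (Real.log (N + 1) - Real.log N) ^ 2 ≤ 1 := by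
  have hN1 : (0:ℝ) < N + 1 := by linarith
  set x : ℝ := Real.log (N + 1) - Real.log N with hx
  have hxpos : 0 < x := by
    have := Real.log_lt_log hN (by linarith : N < N + 1)
    simpa [hx] using sub_pos.mpr this
  have hsinh : x / 2 < Real.sinh (x / 2) := (Real.self_lt_sinh_iff).mpr (by linarith)
  have hexp1 : Real.exp (x / 2) = Real.sqrt (N + 1) / Real.sqrt N := by
    rw [hx, Real.sqrt_eq_rpow, Real.sqrt_eq_rpow,
      Real.rpow_def_of_pos hN1, Real.rpow_def_of_pos hN, ← Real.exp_sub]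
    ring_nf
  have hexp2 : Real.exp (-(x / 2)) = Real.sqrt N / Real.sqrt (N + 1) := by
    rw [Real.exp_neg, hexp1, inv_div]
  have hsN : Real.sqrt N > 0 := Real.sqrt_pos.mpr hN
  have hsN1 : Real.sqrt (N + 1) > 0 := Real.sqrt_pos.mpr hN1
  have hsqN : Real.sqrt N ^ 2 = N := Real.sq_sqrt hN.le
  have hsqN1 : Real.sqrt (N + 1) ^ 2 = N + 1 := Real.sq_sqrt hN1.le
  have hsinh_eq : Real.sinh (x / 2) = 1 / (2 * (Real.sqrt N * Real.sqrt (N + 1))) := by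
    rw [Real.sinh_eq, hexp1, hexp2]
    field_simp
    nlinarith [hsqN, hsqN1]
  have hxlt : x < 1 / (Real.sqrt N * Real.sqrt (N + 1)) := by
    rw [hsinh_eq] at hsinh
    have : x / 2 < 1 / (2 * (Real.sqrt N * Real.sqrt (N + 1))) := hsinh
    rw [div_lt_div_iff₀ (by norm_num) (by positivity)] at this
    rw [lt_div_iff₀ (by positivity)]
    nlinarith
  have hx2 : x ^ 2 < (1 / (Real.sqrt N * Real.sqrt (N + 1))) ^ 2 := by
    nlinarith [hxlt, hxpos, (by positivity : (0:ℝ) < 1 / (Real.sqrt N * Real.sqrt (N + 1)))]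
  have h1 : (1 / (Real.sqrt N * Real.sqrt (N + 1))) ^ 2 = 1 / (N * (N + 1)) := by
    rw [div_pow, mul_pow, hsqN, hsqN1, one_pow]
  rw [h1] at hx2
  have : N * (N + 1) * x ^ 2 < 1 := by
    rw [lt_div_iff₀ (by positivity)] at hx2
    nlinarith
  linarith

lemma v_ge_two (N : ℝ) (hN : 0 < N) : 2 ≤ v N := by
  have hN1 : (0:ℝ) < N + 1 := by linarith
  have hB : N ^ ((1:ℝ)/2) < (N + 1) ^ ((1:ℝ)/2) :=
    Real.rpow_lt_rpow hN.le (by linarith) (by norm_num)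
  set B : ℝ := (N + 1) ^ ((1:ℝ)/2) - N ^ ((1:ℝ)/2) with hBdef
  have hBpos : 0 < B := sub_pos.mpr hB
  have hBle : B ≤ 1 := by
    have h1 : (N + 1) ^ ((1:ℝ)/2) = Real.sqrt (N + 1) := (Real.sqrt_eq_rpow _).symm
    have h2 : N ^ ((1:ℝ)/2) = Real.sqrt N := (Real.sqrt_eq_rpow _).symm
    have hle : Real.sqrt (N + 1) ≤ Real.sqrt N + 1 := by
      rw [Real.sqrt_le_iff]
      constructor
      · positivity
      · nlinarith [Real.sq_sqrt hN.le, Real.sqrt_nonneg N]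
    rw [hBdef, h1, h2]
    linarith
  have hBinv : (1:ℝ) ≤ B ^ (-2 : ℤ) := by
    rw [zpow_neg, zpow_two]
    exact (one_le_inv₀ (by positivity)).mpr (by nlinarith)
  have hA : 0 ≤ ((N + 1) ^ ((3:ℝ)/2) - N ^ ((3:ℝ)/2)) ^ 2 := sq_nonneg _
  unfold v
  linarith


/-- For `α` sufficiently close to `1`, the order-`α` Rényi entropy of the thermal
distribution with mean `N` is at least `g(N) − 4(α−1)(log₂ v(N))²`. -/
theorem stmt_16 (N : ℝ) (hN : 0 < N) :
    ∃ α₀ : ℝ, 1 < α₀ ∧ ∀ α ∈ Set.Ioo (1 : ℝ) α₀,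
      Real.logb 2 ((N + 1) ^ α - N ^ α) / (α - 1)
        ≥ g N - 4 * (α - 1) * (Real.logb 2 (v N)) ^ 2 := by
  have hN1 : (0:ℝ) < N + 1 := by linarith
  have hln2 : (0:ℝ) < Real.log 2 := Real.log_pos one_lt_two
  set L1 := Real.log (N + 1) with hL1
  set L0 := Real.log N with hL0
  set X := Real.logb 2 (v N) with hX
  have hκ4 : (1:ℝ) ≤ X := by
    have h2 : Real.logb 2 (2:ℝ) ≤ Real.logb 2 (v N) :=
      Real.logb_le_logb_of_le one_lt_two (by norm_num) (v_ge_two N hN)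
    simpa using h2
  set κ : ℝ := 4 * X ^ 2 with hκdef
  have hκ : (4:ℝ) ≤ κ := by nlinarith
  set φ : ℝ → ℝ := fun a => (N+1) ^ a - N ^ a with hφdef
  set φ' : ℝ → ℝ := fun a => (N+1) ^ a * L1 - N ^ a * L0 with hφ'def
  have hφd : ∀ a : ℝ, HasDerivAt φ (φ' a) a := fun a =>
    ((Real.hasStrictDerivAt_const_rpow hN1 a).hasDerivAt.sub
      (Real.hasStrictDerivAt_const_rpow hN a).hasDerivAt)
  have hφpos : ∀ a : ℝ, 0 < a → 0 < φ a := fun a ha =>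
    sub_pos.mpr (Real.rpow_lt_rpow hN.le (lt_add_one N) ha)
  have hφ1 : φ 1 = 1 := by simp [hφdef, Real.rpow_one]
  have hφ'1 : φ' 1 = (N+1) * L1 - N * L0 := by simp [hφ'def, Real.rpow_one]
  set ψ : ℝ → ℝ := fun a => Real.log (φ a) / Real.log 2 - (a-1) * g N + κ * (a-1)^2
    with hψdef
  set q : ℝ → ℝ := fun a => φ' a / (φ a * Real.log 2) - g N + 2*κ*(a-1) with hqdef
  have hψd : ∀ a : ℝ, 0 < a → HasDerivAt ψ (q a) a := by
    intro a ha
    have h1 : HasDerivAt (fun a => Real.log (φ a)) (φ' a / φ a) a :=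
      (hφd a).log (hφpos a ha).ne'
    have h2 := ((h1.div_const (Real.log 2)).sub
      (((hasDerivAt_id a).sub_const 1).mul_const (g N))).add
      ((((hasDerivAt_id a).sub_const 1).pow 2).const_mul κ)
    refine h2.congr_deriv ?_
    have hφa := (hφpos a ha).ne'
    simp only [hqdef, id]
    field_simp
    ring
  have hq1 : q 1 = 0 := by
    simp only [hqdef, hφ'1, hφ1, g, Real.logb, ← hL1, ← hL0]
    field_simp
    ring
  set D : ℝ := (((N+1)*L1*L1 - N*L0*L0) - ((N+1)*L1 - N*L0)^2) / Real.log 2 + 2*κ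
    with hDdef
  have hqd : HasDerivAt q D 1 := by
    have hnum : HasDerivAt φ' ((N+1) ^ (1:ℝ) * L1 * L1 - N ^ (1:ℝ) * L0 * L0) 1 :=
      (((Real.hasStrictDerivAt_const_rpow hN1 1).hasDerivAt).mul_const L1).sub
        (((Real.hasStrictDerivAt_const_rpow hN 1).hasDerivAt).mul_const L0)
    have hden : HasDerivAt (fun a => φ a * Real.log 2) (φ' 1 * Real.log 2) 1 :=
      (hφd 1).mul_const _
    have hne : φ 1 * Real.log 2 ≠ 0 := by rw [hφ1]; positivity
    have h2 := ((hnum.div hden hne).sub_const (g N)).add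
      (((hasDerivAt_id 1).sub_const 1).const_mul (2*κ))
    refine h2.congr_deriv ?_
    rw [hDdef, hφ1, hφ'1, Real.rpow_one, Real.rpow_one]
    field_simp
  have hD : 0 < D := by
    have hkey := key_ineq N hN
    have hEq : ((N+1)*L1*L1 - N*L0*L0) - ((N+1)*L1 - N*L0)^2
        = -(N*(N+1)*(L1-L0)^2) := by ring
    rw [hDdef, hEq]
    have hlog2 : (0.6931471803:ℝ) < Real.log 2 := Real.log_two_gt_d9
    have h1 : N*(N+1)*(L1-L0)^2 / Real.log 2 ≤ 1 / Real.log 2 := by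
      gcongr
    have h2 : (1:ℝ) / Real.log 2 < 8 := by
      rw [div_lt_iff₀ hln2]; nlinarith
    have : -(N*(N+1)*(L1-L0)^2) / Real.log 2 = -(N*(N+1)*(L1-L0)^2 / Real.log 2) := by
      ring
    rw [this]
    linarith
  have hslope := hasDerivAt_iff_tendsto_slope.mp hqd
  have hslope' : Filter.Tendsto (slope q 1) (nhdsWithin 1 (Set.Ioi 1)) (nhds D) :=
    hslope.mono_left (nhdsWithin_mono 1 (fun x hx => ne_of_gt hx))
  have h3 : ∀ᶠ a in nhdsWithin (1:ℝ) (Set.Ioi 1), 0 < q a := by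
    filter_upwards [hslope'.eventually (eventually_gt_nhds hD), self_mem_nhdsWithin]
      with a ha ha1
    have hpos : (0:ℝ) < a - 1 := sub_pos.mpr ha1
    have hs : slope q 1 a = (a - 1)⁻¹ * (q a - q 1) := by
      simp [slope, vsub_eq_sub, smul_eq_mul]
    rw [hs, hq1, sub_zero] at ha
    have := mul_pos hpos ha
    rwa [mul_inv_cancel_left₀ (ne_of_gt hpos)] at this
  rw [Filter.eventually_iff, mem_nhdsGT_iff_exists_Ioo_subset] at h3
  obtain ⟨u, hu, hsub⟩ := h3
  refine ⟨u, hu, ?_⟩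
  intro α hα
  have hu1 : (1:ℝ) < u := hu
  have hmono : StrictMonoOn ψ (Set.Icc 1 u) := by
    apply strictMonoOn_of_deriv_pos (convex_Icc 1 u)
    · intro x hx
      exact (hψd x (by linarith [hx.1])).continuousAt.continuousWithinAt
    · intro x hx
      rw [interior_Icc] at hx
      rw [(hψd x (by linarith [hx.1])).deriv]
      exact hsub hx
  have hψ1 : ψ 1 = 0 := by simp [hψdef, hφ1]
  have hψα : 0 < ψ α := by
    have := hmono (Set.left_mem_Icc.mpr hu1.le)
      (Set.mem_Icc.mpr ⟨hα.1.le, hα.2.le⟩) hα.1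
    rwa [hψ1] at this
  have hα1 : 0 < α - 1 := sub_pos.mpr hα.1
  rw [ge_iff_le, le_div_iff₀ hα1]
  have hlogb : Real.logb 2 ((N + 1) ^ α - N ^ α) = Real.log (φ α) / Real.log 2 := by
    rw [Real.logb]
  rw [hlogb]
  have hψα' : 0 < Real.log (φ α) / Real.log 2 - (α-1) * g N + κ * (α-1)^2 := hψα
  calc (g N - 4 * (α - 1) * X ^ 2) * (α - 1)
      = (α-1) * g N - κ * (α-1)^2 := by rw [hκdef]; ring
    _ ≤ Real.log (φ α) / Real.log 2 := by linarith
end
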